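/- arXiv:1303.2191 — 6 statements merged into one kernel-verified Lean document; each statement's English description precedes it below -/
import Mathlib

section
/- Let G : ℝ → ℝ be differentiable and suppose z_E is the unique real number with G'(z_E) = 0. Let τ_u < τ_l, and let z, k_z : [τ_u, τ_l] → ℝ with z differentiable satisfying z'(τ) = k_z(τ), k_z continuous on [τ_u, τ_l] and differentiable on (τ_u, τ_l) with k_z'(τ) = (1/2)·G'(z(τ)), k_z(τ_u) = k_z(τ_l) = 0, and k_z(τ) ≠ 0 for all τ ∈ (τ_u, τ_l). If z(τ_u) = z_u, z(τ_l) = z_l and z_u < z_l, then z_u < z_E < z_l. -/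
/-- Corollary 1 (first part): if `z_E` is the unique depth where
`G'(z_E) = 0` (with `G z = (ω² - ω_ac²(z))/c²(z)`, so `∂H/∂z = 0` at `z_E`),
then for every ray with distinct upper and lower turning point depths
`z_u < z_l` one has `z_u < z_E < z_l`. Along the ray `z' = k_z` and
`k_z' = (1/2) G'(z)`, and `k_z` vanishes exactly at the endpoints. -/
theorem cor_turning_points_partition_depth
    (G z kz : ℝ → ℝ) (hG : Differentiable ℝ G)
    (zE : ℝ) (hzE : deriv G zE = 0)
    (huniq : ∀ w : ℝ, deriv G w = 0 → w = zE)
    (τu τl : ℝ) (hττ : τu < τl)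
    (hz : ∀ τ ∈ Set.Icc τu τl, HasDerivAt z (kz τ) τ)
    (hkc : ContinuousOn kz (Set.Icc τu τl))
    (hkd : ∀ τ ∈ Set.Ioo τu τl, HasDerivAt kz ((1 / 2) * deriv G (z τ)) τ)
    (hu : kz τu = 0) (hl : kz τl = 0)
    (hne : ∀ τ ∈ Set.Ioo τu τl, kz τ ≠ 0)
    (zu zl : ℝ) (hzu : z τu = zu) (hzl : z τl = zl) (hul : zu < zl) :
    zu < zE ∧ zE < zl := by
  have hIcc : Set.Ioo τu τl ⊆ Set.Icc τu τl := Set.Ioo_subset_Icc_self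
  have hzc : ContinuousOn z (Set.Icc τu τl) := fun τ hτ =>
    (hz τ hτ).continuousAt.continuousWithinAt
  -- Rolle for kz
  obtain ⟨c, hc, hc0⟩ := exists_hasDerivAt_eq_zero hττ hkc (hu.trans hl.symm)
    (fun τ hτ => hkd τ hτ)
  have hGc : deriv G (z c) = 0 := by
    have : (1/2 : ℝ) * deriv G (z c) = 0 := hc0
    linarith
  have hzcE : z c = zE := huniq _ hGc
  -- sign constancy of kz on the open interval
  have key : ∀ a ∈ Set.Ioo τu τl, ∀ b ∈ Set.Ioo τu τl, 0 < kz a → 0 < kz b := by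
    intro a ha b hb hka
    rcases lt_trichotomy (kz b) 0 with hb0 | hb0 | hb0
    · exfalso
      have hsub : Set.uIcc a b ⊆ Set.Ioo τu τl :=
        Set.ordConnected_Ioo.uIcc_subset ha hb
      have hconn : ContinuousOn kz (Set.uIcc a b) :=
        hkc.mono (hsub.trans hIcc)
      have : (0:ℝ) ∈ Set.uIcc (kz a) (kz b) := by
        rw [Set.mem_uIcc]; right; constructor <;> linarith
      obtain ⟨t, ht, ht0⟩ := intermediate_value_uIcc hconn this
      exact hne t (hsub ht) ht0
    · exact absurd hb0 (hne b hb)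
    · exact hb0
  -- midpoint
  set m := (τu + τl) / 2 with hm
  have hmI : m ∈ Set.Ioo τu τl := ⟨by simp [hm]; linarith, by simp [hm]; linarith⟩
  have hderiv : ∀ τ ∈ interior (Set.Icc τu τl), deriv z τ = kz τ := by
    intro τ hτ
    rw [interior_Icc] at hτ
    exact (hz τ (hIcc hτ)).deriv
  rcases lt_trichotomy (kz m) 0 with hm0 | hm0 | hm0
  · -- kz negative everywhere on interior → z strictly decreasing, contradiction
    exfalso
    have hneg : ∀ τ ∈ Set.Ioo τu τl, kz τ < 0 := by
      intro τ hτ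
      by_contra h
      push_neg at h
      have : 0 < kz τ := lt_of_le_of_ne h (Ne.symm (hne τ hτ))
      exact absurd (key τ hτ m hmI this) (not_lt.mpr hm0.le)
    have hanti : StrictAntiOn z (Set.Icc τu τl) := by
      apply strictAntiOn_of_deriv_neg (convex_Icc τu τl) hzc
      intro τ hτ
      rw [interior_Icc] at hτ
      rw [(hz τ (hIcc hτ)).deriv]
      exact hneg τ hτ
    have := hanti (Set.left_mem_Icc.mpr hττ.le) (Set.right_mem_Icc.mpr hττ.le) hττ
    rw [hzu, hzl] at this
    linarith
  · exact absurd hm0 (hne m hmI)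
  · have hpos : ∀ τ ∈ Set.Ioo τu τl, 0 < kz τ := fun τ hτ => key m hmI τ hτ hm0
    have hmono : StrictMonoOn z (Set.Icc τu τl) := by
      apply strictMonoOn_of_deriv_pos (convex_Icc τu τl) hzc
      intro τ hτ
      rw [interior_Icc] at hτ
      rw [(hz τ (hIcc hτ)).deriv]
      exact hpos τ hτ
    have h1 := hmono (Set.left_mem_Icc.mpr hττ.le) (hIcc hc) hc.1
    have h2 := hmono (hIcc hc) (Set.right_mem_Icc.mpr hττ.le) hc.2
    rw [hzu, hzcE] at h1
    rw [hzl, hzcE] at h2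
    exact ⟨h1, h2⟩
end

section
/- Let g > 0, m > 0, ω > 0 and set z_E = g(m+2)/(2ω²) and k_h = ω²·√(m/(g²(m+2))) (so that k_h² = (ω² − ω_ac²(z_E))/c²(z_E) = mω⁴/(g²(m+2)) > 0). Then for any x₀, t₀ ∈ ℝ, the functions x(τ) = x₀ + k_h·τ, z(τ) = z_E, t(τ) = t₀ + (ωm/(g·z_E))·τ, together with constant k_h, k_z(τ) = 0 and constant ω, satisfy the characteristic system dx/dτ = k_h, dz/dτ = k_z, dt/dτ = ω/c²(z), dk_h/dτ = 0, dk_z/dτ = (1/2)·d/dz[(ω² − ω_ac²(z))/c²(z)] evaluated at z(τ), dω/dτ = 0, as well as the dispersion relation k_h² + k_z² = (ω² − ω_ac²(z))/c²(z). Hence the ray starting at depth z_E with this horizontal wavenumber propagates horizontally. -/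
open Real

/-- Corollary 1 (second part), for the polytrope `c²(z) = gz/m`,
`ω_ac²(z) = g(m+2)/(4z)`: the ray starting at the partition depth
`z_E = g(m+2)/(2ω²)` with horizontal wavenumber
`k_h = ω²√(m/(g²(m+2)))` (so `k_h² = (ω² - ω_ac²(z_E))/c²(z_E)`)
propagates horizontally: the constant-depth curve solves the full
characteristic system and the dispersion relation. -/
theorem horizontal_ray_at_partition_depth
    (g m ω : ℝ) (hg : 0 < g) (hm : 0 < m) (hω : 0 < ω)
    (x0 t0 : ℝ)
    (zE kh : ℝ)
    (hzE : zE = g * (m + 2) / (2 * ω ^ 2))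
    (hkh : kh = ω ^ 2 * Real.sqrt (m / (g ^ 2 * (m + 2))))
    (c2 ωac2 : ℝ → ℝ)
    (hc2 : ∀ z, c2 z = g * z / m)
    (hωac2 : ∀ z, ωac2 z = g * (m + 2) / (4 * z))
    (x z t khf kzf ωf : ℝ → ℝ)
    (hx : ∀ τ, x τ = x0 + kh * τ)
    (hz : ∀ τ, z τ = zE)
    (ht : ∀ τ, t τ = t0 + (ω * m / (g * zE)) * τ)
    (hkhf : ∀ τ, khf τ = kh)
    (hkzf : ∀ τ, kzf τ = 0)
    (hωf : ∀ τ, ωf τ = ω) :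
    kh ^ 2 = m * ω ^ 4 / (g ^ 2 * (m + 2)) ∧
    (∀ τ : ℝ, HasDerivAt x (khf τ) τ) ∧
    (∀ τ : ℝ, HasDerivAt z (kzf τ) τ) ∧
    (∀ τ : ℝ, HasDerivAt t (ωf τ / c2 (z τ)) τ) ∧
    (∀ τ : ℝ, HasDerivAt khf 0 τ) ∧
    (∀ τ : ℝ, HasDerivAt kzf
      ((1 / 2) * deriv (fun w => (ω ^ 2 - ωac2 w) / c2 w) (z τ)) τ) ∧
    (∀ τ : ℝ, HasDerivAt ωf 0 τ) ∧
    (∀ τ : ℝ, (khf τ) ^ 2 + (kzf τ) ^ 2 = (ω ^ 2 - ωac2 (z τ)) / c2 (z τ)) := by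
  have hzEpos : 0 < zE := by rw [hzE]; positivity
  have hkh2 : kh ^ 2 = m * ω ^ 4 / (g ^ 2 * (m + 2)) := by
    rw [hkh, mul_pow, sq_sqrt (by positivity : (0:ℝ) ≤ m / (g ^ 2 * (m + 2)))]
    ring
  have hxfun : x = fun τ => x0 + kh * τ := funext hx
  have hzfun : z = fun _ => zE := funext hz
  have htfun : t = fun τ => t0 + (ω * m / (g * zE)) * τ := funext ht
  have hkhfun : khf = fun _ => kh := funext hkhf
  have hkzfun : kzf = fun _ => (0:ℝ) := funext hkzf
  have hωfun : ωf = fun _ => ω := funext hωf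
  -- derivative of the dispersion function vanishes at zE
  have hffun : (fun w => (ω ^ 2 - ωac2 w) / c2 w)
      = fun w => (ω ^ 2 - (g * (m + 2) / 4) * w⁻¹) / (g / m * w) := by
    funext w
    rw [hωac2 w, hc2 w]
    ring
  have hderiv : HasDerivAt (fun w => (ω ^ 2 - ωac2 w) / c2 w) 0 zE := by
    rw [hffun]
    have hnum : HasDerivAt (fun w : ℝ => ω ^ 2 - (g * (m + 2) / 4) * w⁻¹)
        (-((g * (m + 2) / 4) * (-(zE ^ 2)⁻¹))) zE :=
      ((hasDerivAt_inv hzEpos.ne').const_mul (g * (m + 2) / 4)).const_sub (ω ^ 2)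
    have hden : HasDerivAt (fun w : ℝ => g / m * w) (g / m * 1) zE :=
      (hasDerivAt_id zE).const_mul (g / m)
    have hdenne : g / m * zE ≠ 0 := by positivity
    have h := hnum.div hden hdenne
    refine h.congr_deriv ?_
    rw [hzE]
    field_simp
    ring
  have hderiv0 : deriv (fun w => (ω ^ 2 - ωac2 w) / c2 w) zE = 0 := hderiv.deriv
  refine ⟨hkh2, ?_, ?_, ?_, ?_, ?_, ?_, ?_⟩
  · intro τ
    rw [hxfun, hkhf]
    simpa using ((hasDerivAt_id τ).const_mul kh).const_add x0
  · intro τ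
    rw [hzfun, hkzf]
    exact hasDerivAt_const τ zE
  · intro τ
    rw [htfun, hωf, hz, hc2 zE]
    have : ω / (g * zE / m) = ω * m / (g * zE) := by
      field_simp
    rw [this]
    simpa using ((hasDerivAt_id τ).const_mul (ω * m / (g * zE))).const_add t0
  · intro τ
    rw [hkhfun]
    exact hasDerivAt_const τ kh
  · intro τ
    rw [hkzfun, hz, hderiv0, mul_zero]
    exact hasDerivAt_const τ 0
  · intro τ
    rw [hωfun]
    exact hasDerivAt_const τ ω
  · intro τ
    rw [hkhf, hkzf, hz, hωac2 zE, hc2 zE, hkh2, hzE]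
    field_simp
    ring
end

section
/- Let g > 0, m > 0, ω > 0, k_h > 0, set a = ω²m/(2k_h²g), suppose b² := a² − m(m+2)/(4k_h²) ≥ 0 and let b = √(b²). Let λ = k_h·g/(ω·m), α₀, C_x ∈ ℝ, and define on an interval I on which z(t) > 0: α(t) = λ·t + α₀, z(t) = a + b·sin(α(t)), x(t) = (ω/(2k_h))·t − b·cos(α(t)) + C_x, and k_z(t) = k_h·b·cos(α(t))/z(t). Then for all t ∈ I: (i) dz/dt = (g·z(t)/(ω·m))·k_z(t); (ii) dx/dt = (g·z(t)/(ω·m))·k_h; (iii) k_h² + k_z(t)² = (ω² − ω_ac²(z(t)))/c²(z(t)). -/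
/-- The explicit parametric ray solution for the polytrope model
(`c²(z) = gz/m`, `ω_ac²(z) = g(m+2)/(4z)`): with `a = ω²m/(2k_h²g)`,
`b = √(a² - m(m+2)/(4k_h²))`, `λ = k_h g/(ωm)`, the functions
`α(t) = λt + α₀`, `z(t) = a + b sin α(t)`,
`x(t) = (ω/(2k_h))t - b cos α(t) + C_x`, `k_z(t) = k_h b cos α(t)/z(t)`
satisfy, on any interval where `z(t) > 0`:
(i) `dz/dt = (gz/(ωm)) k_z`, (ii) `dx/dt = (gz/(ωm)) k_h`, and
(iii) the dispersion relation `k_h² + k_z² = (ω² - ω_ac²(z))/c²(z)`. -/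
theorem polytrope_ray_parametric_solution
    (g m ω kh α0 Cx : ℝ) (hg : 0 < g) (hm : 0 < m) (hω : 0 < ω) (hkh : 0 < kh)
    (a b2 b lam : ℝ)
    (ha : a = ω ^ 2 * m / (2 * kh ^ 2 * g))
    (hb2 : b2 = a ^ 2 - m * (m + 2) / (4 * kh ^ 2)) (hb2nn : 0 ≤ b2)
    (hb : b = Real.sqrt b2)
    (hlam : lam = kh * g / (ω * m))
    (I : Set ℝ)
    (α z x kz : ℝ → ℝ)
    (hα : ∀ t, α t = lam * t + α0)
    (hz : ∀ t, z t = a + b * Real.sin (α t))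
    (hx : ∀ t, x t = (ω / (2 * kh)) * t - b * Real.cos (α t) + Cx)
    (hkz : ∀ t, kz t = kh * b * Real.cos (α t) / z t)
    (hpos : ∀ t ∈ I, 0 < z t) :
    ∀ t ∈ I,
      HasDerivAt z ((g * z t / (ω * m)) * kz t) t ∧
      HasDerivAt x ((g * z t / (ω * m)) * kh) t ∧
      kh ^ 2 + (kz t) ^ 2
        = (ω ^ 2 - g * (m + 2) / (4 * z t)) / (g * z t / m) := by
  intro t ht
  have hzt : 0 < z t := hpos t ht
  have hzne : z t ≠ 0 := ne_of_gt hzt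
  have hωm : ω * m ≠ 0 := by positivity
  have hbsq : b ^ 2 = b2 := by rw [hb, Real.sq_sqrt hb2nn]
  -- derivative of α
  have hαd : HasDerivAt α lam t := by
    have h1 : HasDerivAt (fun s => lam * s + α0) (lam * 1) t :=
      ((hasDerivAt_id t).const_mul lam).add_const α0
    have h2 := h1.congr_of_eventuallyEq (Filter.Eventually.of_forall fun s => hα s)
    simpa using h2
  -- derivative of z
  have hzd : HasDerivAt z (b * (Real.cos (α t) * lam)) t := by
    have : HasDerivAt (fun s => a + b * Real.sin (α s))
        (b * (Real.cos (α t) * lam)) t := by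
      exact ((hαd.sin).const_mul b).const_add a
    exact this.congr_of_eventuallyEq
      (Filter.Eventually.of_forall fun s => hz s)
  -- derivative of x
  have hxd : HasDerivAt x (ω / (2 * kh) * 1 - b * (-Real.sin (α t) * lam)) t := by
    have : HasDerivAt (fun s => (ω / (2 * kh)) * s - b * Real.cos (α s) + Cx)
        (ω / (2 * kh) * 1 - b * (-Real.sin (α t) * lam)) t := by
      exact ((((hasDerivAt_id t).const_mul (ω / (2 * kh))).sub
        ((hαd.cos).const_mul b)).add_const Cx)
    exact this.congr_of_eventuallyEq
      (Filter.Eventually.of_forall fun s => hx s)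
  refine ⟨?_, ?_, ?_⟩
  · convert hzd using 1
    rw [hkz, hlam]
    field_simp
  · convert hxd using 1
    rw [hz, hlam, ha]
    field_simp
    ring
  · have hzt' : z t = a + b * Real.sin (α t) := hz t
    have htrig : Real.sin (α t) ^ 2 + Real.cos (α t) ^ 2 = 1 :=
      Real.sin_sq_add_cos_sq _
    have ha' : ω ^ 2 * m = 2 * kh ^ 2 * g * a := by
      rw [ha]; field_simp
    have hb2' : 4 * kh ^ 2 * b ^ 2 = 4 * kh ^ 2 * a ^ 2 - m * (m + 2) := by
      rw [hbsq, hb2]; field_simp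
    rw [hkz]
    field_simp
    rw [hzt']
    linear_combination (4 * g * kh ^ 2 * b ^ 2) * htrig
      + g * hb2'
      - (4 * (a + b * Real.sin (α t))) * ha'
end

section
/- Let ξ > 1 with ξ ≠ 2 and z_s > 0. For θ ∈ (−π/2, π/2) define a(θ) = ξ·z_s/(2cos²θ), b(θ) = (z_s/(2cos²θ))·√((ξ−2)² + 4(ξ−1)sin²θ), α₀(θ) = σπ/2 − θ + arctan((ξ/(ξ−2))tan θ) with σ = +1 if ξ < 2 and σ = −1 if ξ > 2, and define X(θ, α) = a(θ)·(α − α₀(θ)) − b(θ)·(cos α − cos α₀(θ)), Z(θ, α) = a(θ) + b(θ)·sin α. Then for all θ ∈ (−π/2, π/2) and α ∈ ℝ, the Jacobian determinant (∂X/∂θ)(∂Z/∂α) − (∂X/∂α)(∂Z/∂θ) equals J(θ, α) := b·cos α · ( 2a(α − α₀)·tan θ − a·α₀'(θ) + z_s(1 + tan²θ) ) − (tan θ / b)·( (a³ + 3ab²)·sin α + 3a²b + b³ ), where a = a(θ), b = b(θ), α₀ = α₀(θ). -/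
private lemma jac_invcos_deriv (C θ : ℝ) (hc : Real.cos θ ≠ 0) :
    HasDerivAt (fun x => C / (2 * Real.cos x ^ 2)) (C * Real.sin θ / Real.cos θ ^ 3) θ := by
  have h1 : HasDerivAt (fun x => 2 * Real.cos x ^ 2)
      (2 * ((2 : ℕ) * Real.cos θ ^ (2 - 1) * (-Real.sin θ))) θ :=
    ((Real.hasDerivAt_cos θ).pow 2).const_mul 2
  have h2 := (hasDerivAt_const θ C).div h1 (by positivity)
  refine HasDerivAt.congr_deriv h2 (Eq.symm ?_)
  field_simp
  ring

private lemma jac_assemble (A B t D0 A0 zs α ca sa cA sA : ℝ) (hB : B ≠ 0)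
    (hpyα : sa ^ 2 + ca ^ 2 = 1)
    (hstar : t * (A ^ 2 + B ^ 2) * cA - B ^ 2 * sA * D0 = zs * (1 + t ^ 2) * B) :
    (2 * A * t * (α - A0) + A * (0 - D0)
        - ((t * (A ^ 2 + B ^ 2) / B) * (ca - cA) + B * (0 - -sA * D0))) * (B * ca)
      - (A + B * sa) * (2 * A * t + (t * (A ^ 2 + B ^ 2) / B) * sa)
      = B * ca * (2 * A * (α - A0) * t - A * D0 + zs * (1 + t ^ 2))
        - (t / B) * ((A ^ 3 + 3 * A * B ^ 2) * sa + 3 * A ^ 2 * B + B ^ 3) := by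
  field_simp
  linear_combination (B * ca) * hstar - (t * (A ^ 2 + B ^ 2) * B) * hpyα

set_option maxHeartbeats 2000000 in
/-- The scaled Jacobian of the ray-to-Cartesian coordinate transform for a
monochromatic point source at depth `z_s` in the polytrope model (paper's
eq. A8): with `a(θ) = ξ z_s/(2cos²θ)`,
`b(θ) = (z_s/(2cos²θ))√((ξ-2)² + 4(ξ-1)sin²θ)`,
`α₀(θ) = σπ/2 - θ + arctan((ξ/(ξ-2)) tan θ)` (`σ = +1` if `ξ < 2`, `σ = -1`
if `ξ > 2`), and the ray map `X(θ,α) = a(α-α₀) - b(cos α - cos α₀)`,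
`Z(θ,α) = a + b sin α`, the Jacobian determinant
`∂X/∂θ · ∂Z/∂α - ∂X/∂α · ∂Z/∂θ` equals
`J(θ,α) = b cos α (2a(α-α₀) tan θ - a α₀'(θ) + z_s(1 + tan²θ))
 - (tan θ/b)((a³ + 3ab²) sin α + 3a²b + b³)`. -/
theorem point_source_jacobian_formula
    (ξ zs : ℝ) (hξ : 1 < ξ) (hξ2 : ξ ≠ 2) (hzs : 0 < zs)
    (σ : ℝ) (hσ : (ξ < 2 ∧ σ = 1) ∨ (2 < ξ ∧ σ = -1))
    (a b α0 : ℝ → ℝ)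
    (ha : ∀ θ, a θ = ξ * zs / (2 * Real.cos θ ^ 2))
    (hb : ∀ θ, b θ = zs / (2 * Real.cos θ ^ 2) *
      Real.sqrt ((ξ - 2) ^ 2 + 4 * (ξ - 1) * Real.sin θ ^ 2))
    (hα0 : ∀ θ, α0 θ = σ * Real.pi / 2 - θ +
      Real.arctan ((ξ / (ξ - 2)) * Real.tan θ))
    (X Z : ℝ → ℝ → ℝ)
    (hX : ∀ θ α, X θ α = a θ * (α - α0 θ)
      - b θ * (Real.cos α - Real.cos (α0 θ)))
    (hZ : ∀ θ α, Z θ α = a θ + b θ * Real.sin α) :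
    ∀ θ ∈ Set.Ioo (-(Real.pi / 2)) (Real.pi / 2), ∀ α : ℝ,
      deriv (fun θ' => X θ' α) θ * deriv (fun α' => Z θ α') α
        - deriv (fun α' => X θ α') α * deriv (fun θ' => Z θ' α) θ
      = b θ * Real.cos α *
          (2 * a θ * (α - α0 θ) * Real.tan θ - a θ * deriv α0 θ +
            zs * (1 + Real.tan θ ^ 2))
        - (Real.tan θ / b θ) *
            ((a θ ^ 3 + 3 * a θ * b θ ^ 2) * Real.sin α +
              3 * a θ ^ 2 * b θ + b θ ^ 3) := by
  obtain rfl : a = fun θ => ξ * zs / (2 * Real.cos θ ^ 2) := funext ha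
  obtain rfl : b = fun θ => zs / (2 * Real.cos θ ^ 2) *
      Real.sqrt ((ξ - 2) ^ 2 + 4 * (ξ - 1) * Real.sin θ ^ 2) := funext hb
  obtain rfl : α0 = fun θ => σ * Real.pi / 2 - θ +
      Real.arctan ((ξ / (ξ - 2)) * Real.tan θ) := funext hα0
  obtain rfl : X = fun θ α => (fun θ => ξ * zs / (2 * Real.cos θ ^ 2)) θ * (α - (fun θ => σ * Real.pi / 2 - θ +
      Real.arctan ((ξ / (ξ - 2)) * Real.tan θ)) θ)
      - (fun θ => zs / (2 * Real.cos θ ^ 2) *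
      Real.sqrt ((ξ - 2) ^ 2 + 4 * (ξ - 1) * Real.sin θ ^ 2)) θ *
        (Real.cos α - Real.cos ((fun θ => σ * Real.pi / 2 - θ +
      Real.arctan ((ξ / (ξ - 2)) * Real.tan θ)) θ)) := funext fun θ => funext (hX θ)
  obtain rfl : Z = fun θ α => (fun θ => ξ * zs / (2 * Real.cos θ ^ 2)) θ +
      (fun θ => zs / (2 * Real.cos θ ^ 2) *
      Real.sqrt ((ξ - 2) ^ 2 + 4 * (ξ - 1) * Real.sin θ ^ 2)) θ * Real.sin α :=
    funext fun θ => funext (hZ θ)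
  intro θ hθ α
  beta_reduce
  -- basic facts
  have hc : 0 < Real.cos θ := Real.cos_pos_of_mem_Ioo hθ
  have hc0 : Real.cos θ ≠ 0 := ne_of_gt hc
  have hpy := Real.sin_sq_add_cos_sq θ
  have hξ2' : ξ - 2 ≠ 0 := sub_ne_zero.mpr hξ2
  have hRpos : 0 < (ξ - 2) ^ 2 + 4 * (ξ - 1) * Real.sin θ ^ 2 := by
    have h1 : 0 < (ξ - 2) ^ 2 := by positivity
    nlinarith [sq_nonneg (Real.sin θ)]
  have hR0 : (ξ - 2) ^ 2 + 4 * (ξ - 1) * Real.sin θ ^ 2 ≠ 0 := ne_of_gt hRpos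
  have hsRpos : 0 < Real.sqrt ((ξ - 2) ^ 2 + 4 * (ξ - 1) * Real.sin θ ^ 2) :=
    Real.sqrt_pos.mpr hRpos
  have hsR0 : Real.sqrt ((ξ - 2) ^ 2 + 4 * (ξ - 1) * Real.sin θ ^ 2) ≠ 0 := ne_of_gt hsRpos
  have hsR2 : Real.sqrt ((ξ - 2) ^ 2 + 4 * (ξ - 1) * Real.sin θ ^ 2) ^ 2
      = (ξ - 2) ^ 2 + 4 * (ξ - 1) * Real.sin θ ^ 2 := Real.sq_sqrt hRpos.le
  have hσ2 : σ ^ 2 = 1 := by rcases hσ with ⟨_, rfl⟩ | ⟨_, rfl⟩ <;> norm_num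
  have hσ1 : σ = 1 ∨ σ = -1 := by rcases hσ with ⟨_, rfl⟩ | ⟨_, rfl⟩ <;> simp
  have hepos : 0 < σ * (2 - ξ) := by
    rcases hσ with ⟨h, rfl⟩ | ⟨h, rfl⟩ <;> nlinarith
  have he0 : σ * (2 - ξ) ≠ 0 := ne_of_gt hepos
  have hσe : σ * (σ * (2 - ξ)) = 2 - ξ := by linear_combination (2 - ξ) * hσ2
  have he2 : (σ * (2 - ξ)) ^ 2 = (ξ - 2) ^ 2 := by linear_combination (2 - ξ) ^ 2 * hσ2
  -- the B ≠ 0 fact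
  have hB0 : zs / (2 * Real.cos θ ^ 2) *
      Real.sqrt ((ξ - 2) ^ 2 + 4 * (ξ - 1) * Real.sin θ ^ 2) ≠ 0 := by positivity
  -- q-lemma
  have hRalt : (ξ - 2) ^ 2 + 4 * (ξ - 1) * Real.sin θ ^ 2
      = (ξ - 2) ^ 2 * Real.cos θ ^ 2 + ξ ^ 2 * Real.sin θ ^ 2 := by
    linear_combination (-(ξ - 2) ^ 2) * hpy
  have hsplit : 1 + (ξ / (ξ - 2) * Real.tan θ) ^ 2
      = ((ξ - 2) ^ 2 * Real.cos θ ^ 2 + ξ ^ 2 * Real.sin θ ^ 2)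
        / ((ξ - 2) ^ 2 * Real.cos θ ^ 2) := by
    rw [Real.tan_eq_sin_div_cos]
    field_simp
  have hq : Real.sqrt (1 + (ξ / (ξ - 2) * Real.tan θ) ^ 2)
      = Real.sqrt ((ξ - 2) ^ 2 + 4 * (ξ - 1) * Real.sin θ ^ 2)
        / (σ * (2 - ξ) * Real.cos θ) := by
    rw [hRalt, hsplit, show (ξ - 2) ^ 2 * Real.cos θ ^ 2 = (σ * (2 - ξ) * Real.cos θ) ^ 2 by
        rw [mul_pow, he2],
      Real.sqrt_div (by positivity), Real.sqrt_sq (by positivity)]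
  -- cos and sin of α0 θ
  have hφc : Real.cos (Real.arctan (ξ / (ξ - 2) * Real.tan θ))
      = 1 / (Real.sqrt ((ξ - 2) ^ 2 + 4 * (ξ - 1) * Real.sin θ ^ 2)
        / (σ * (2 - ξ) * Real.cos θ)) := by
    rw [Real.cos_arctan, hq]
  have hφs : Real.sin (Real.arctan (ξ / (ξ - 2) * Real.tan θ))
      = (ξ / (ξ - 2) * Real.tan θ)
        / (Real.sqrt ((ξ - 2) ^ 2 + 4 * (ξ - 1) * Real.sin θ ^ 2)
          / (σ * (2 - ξ) * Real.cos θ)) := by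
    rw [Real.sin_arctan, hq]
  have harg : σ * Real.pi / 2 - θ + Real.arctan (ξ / (ξ - 2) * Real.tan θ)
      = σ * (Real.pi / 2) + (Real.arctan (ξ / (ξ - 2) * Real.tan θ) - θ) := by ring
  have hcσ : Real.cos (σ * (Real.pi / 2)) = 0 := by
    rcases hσ1 with h | h <;> simp [h]
  have hsσ : Real.sin (σ * (Real.pi / 2)) = σ := by
    rcases hσ1 with h | h <;> simp [h]
  have hcos0 : Real.cos (σ * Real.pi / 2 - θ + Real.arctan (ξ / (ξ - 2) * Real.tan θ))
      = 2 * Real.sin θ * Real.cos θ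
        / Real.sqrt ((ξ - 2) ^ 2 + 4 * (ξ - 1) * Real.sin θ ^ 2) := by
    rw [harg, Real.cos_add, hcσ, hsσ, Real.sin_sub, hφc, hφs, Real.tan_eq_sin_div_cos]
    field_simp
    grind
  have hsin0 : Real.sin (σ * Real.pi / 2 - θ + Real.arctan (ξ / (ξ - 2) * Real.tan θ))
      = -(ξ - 2 + 2 * Real.sin θ ^ 2)
        / Real.sqrt ((ξ - 2) ^ 2 + 4 * (ξ - 1) * Real.sin θ ^ 2) := by
    rw [harg, Real.sin_add, hcσ, hsσ, Real.cos_sub, hφc, hφs, Real.tan_eq_sin_div_cos]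
    field_simp
    grind
  -- derivatives
  have hda : HasDerivAt (fun x => ξ * zs / (2 * Real.cos x ^ 2))
      (2 * (ξ * zs / (2 * Real.cos θ ^ 2)) * Real.tan θ) θ := by
    have h := jac_invcos_deriv (ξ * zs) θ hc0
    refine HasDerivAt.congr_deriv h (Eq.symm ?_)
    rw [Real.tan_eq_sin_div_cos]
    field_simp
  have hdsq : HasDerivAt (fun x => Real.sqrt ((ξ - 2) ^ 2 + 4 * (ξ - 1) * Real.sin x ^ 2))
      (1 / (2 * Real.sqrt ((ξ - 2) ^ 2 + 4 * (ξ - 1) * Real.sin θ ^ 2)) *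
        (4 * (ξ - 1) * (2 * Real.sin θ * Real.cos θ))) θ := by
    have hin : HasDerivAt (fun x => (ξ - 2) ^ 2 + 4 * (ξ - 1) * Real.sin x ^ 2)
        (4 * (ξ - 1) * (2 * Real.sin θ * Real.cos θ)) θ := by
      have := (((Real.hasDerivAt_sin θ).pow 2).const_mul (4 * (ξ - 1))).const_add ((ξ - 2) ^ 2)
      refine HasDerivAt.congr_deriv this (Eq.symm ?_)
      push_cast
      ring
    exact (Real.hasDerivAt_sqrt hR0).comp θ hin
  have hdb : HasDerivAt (fun x => zs / (2 * Real.cos x ^ 2) *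
      Real.sqrt ((ξ - 2) ^ 2 + 4 * (ξ - 1) * Real.sin x ^ 2))
      (Real.tan θ * ((ξ * zs / (2 * Real.cos θ ^ 2)) ^ 2
          + (zs / (2 * Real.cos θ ^ 2) *
            Real.sqrt ((ξ - 2) ^ 2 + 4 * (ξ - 1) * Real.sin θ ^ 2)) ^ 2)
        / (zs / (2 * Real.cos θ ^ 2) *
            Real.sqrt ((ξ - 2) ^ 2 + 4 * (ξ - 1) * Real.sin θ ^ 2))) θ := by
    have h := (jac_invcos_deriv zs θ hc0).mul hdsq
    refine HasDerivAt.congr_deriv h (Eq.symm ?_)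
    rw [Real.tan_eq_sin_div_cos]
    field_simp
    grind
  have hdα0 : HasDerivAt (fun x => σ * Real.pi / 2 - x +
      Real.arctan (ξ / (ξ - 2) * Real.tan x))
      (-1 + ξ * (ξ - 2) / ((ξ - 2) ^ 2 + 4 * (ξ - 1) * Real.sin θ ^ 2)) θ := by
    have h1 : HasDerivAt (fun x => ξ / (ξ - 2) * Real.tan x)
        (ξ / (ξ - 2) * (1 / Real.cos θ ^ 2)) θ := (Real.hasDerivAt_tan hc0).const_mul _
    have h2 := (Real.hasDerivAt_arctan (ξ / (ξ - 2) * Real.tan θ)).comp θ h1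
    have h3 : HasDerivAt (fun x => σ * Real.pi / 2 - x) (0 - 1) θ :=
      (hasDerivAt_const θ (σ * Real.pi / 2)).sub (hasDerivAt_id θ)
    have h4 := h3.add h2
    refine HasDerivAt.congr_deriv h4 (Eq.symm ?_)
    rw [hsplit]
    field_simp
    grind
  -- star identity
  have hstar : Real.tan θ * ((ξ * zs / (2 * Real.cos θ ^ 2)) ^ 2
        + (zs / (2 * Real.cos θ ^ 2) *
          Real.sqrt ((ξ - 2) ^ 2 + 4 * (ξ - 1) * Real.sin θ ^ 2)) ^ 2)
        * Real.cos (σ * Real.pi / 2 - θ + Real.arctan (ξ / (ξ - 2) * Real.tan θ))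
      - (zs / (2 * Real.cos θ ^ 2) *
          Real.sqrt ((ξ - 2) ^ 2 + 4 * (ξ - 1) * Real.sin θ ^ 2)) ^ 2
        * Real.sin (σ * Real.pi / 2 - θ + Real.arctan (ξ / (ξ - 2) * Real.tan θ))
        * (-1 + ξ * (ξ - 2) / ((ξ - 2) ^ 2 + 4 * (ξ - 1) * Real.sin θ ^ 2))
      = zs * (1 + Real.tan θ ^ 2) * (zs / (2 * Real.cos θ ^ 2) *
          Real.sqrt ((ξ - 2) ^ 2 + 4 * (ξ - 1) * Real.sin θ ^ 2)) := by
    rw [hcos0, hsin0, Real.tan_eq_sin_div_cos]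
    generalize hsg : Real.sqrt ((ξ - 2) ^ 2 + 4 * (ξ - 1) * Real.sin θ ^ 2) = sq at *
    generalize hRg : (ξ - 2) ^ 2 + 4 * (ξ - 1) * Real.sin θ ^ 2 = R at *
    field_simp
    grind
  -- the four partial derivatives
  have hcosA0 : HasDerivAt (fun x => Real.cos (σ * Real.pi / 2 - x +
      Real.arctan (ξ / (ξ - 2) * Real.tan x)))
      (-Real.sin (σ * Real.pi / 2 - θ + Real.arctan (ξ / (ξ - 2) * Real.tan θ)) *
        (-1 + ξ * (ξ - 2) / ((ξ - 2) ^ 2 + 4 * (ξ - 1) * Real.sin θ ^ 2))) θ :=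
    (Real.hasDerivAt_cos _).comp θ hdα0
  have hdX : HasDerivAt (fun θ' => ξ * zs / (2 * Real.cos θ' ^ 2) *
      (α - (σ * Real.pi / 2 - θ' + Real.arctan (ξ / (ξ - 2) * Real.tan θ')))
      - zs / (2 * Real.cos θ' ^ 2) *
          Real.sqrt ((ξ - 2) ^ 2 + 4 * (ξ - 1) * Real.sin θ' ^ 2) *
        (Real.cos α - Real.cos (σ * Real.pi / 2 - θ' +
          Real.arctan (ξ / (ξ - 2) * Real.tan θ'))))
      ((2 * (ξ * zs / (2 * Real.cos θ ^ 2)) * Real.tan θ) *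
          (α - (σ * Real.pi / 2 - θ + Real.arctan (ξ / (ξ - 2) * Real.tan θ)))
        + (ξ * zs / (2 * Real.cos θ ^ 2)) *
          (0 - (-1 + ξ * (ξ - 2) / ((ξ - 2) ^ 2 + 4 * (ξ - 1) * Real.sin θ ^ 2)))
        - ((Real.tan θ * ((ξ * zs / (2 * Real.cos θ ^ 2)) ^ 2
              + (zs / (2 * Real.cos θ ^ 2) *
                Real.sqrt ((ξ - 2) ^ 2 + 4 * (ξ - 1) * Real.sin θ ^ 2)) ^ 2)
            / (zs / (2 * Real.cos θ ^ 2) *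
                Real.sqrt ((ξ - 2) ^ 2 + 4 * (ξ - 1) * Real.sin θ ^ 2))) *
            (Real.cos α - Real.cos (σ * Real.pi / 2 - θ +
              Real.arctan (ξ / (ξ - 2) * Real.tan θ)))
          + (zs / (2 * Real.cos θ ^ 2) *
              Real.sqrt ((ξ - 2) ^ 2 + 4 * (ξ - 1) * Real.sin θ ^ 2)) *
            (0 - -Real.sin (σ * Real.pi / 2 - θ +
                Real.arctan (ξ / (ξ - 2) * Real.tan θ)) *
              (-1 + ξ * (ξ - 2) / ((ξ - 2) ^ 2 + 4 * (ξ - 1) * Real.sin θ ^ 2))))) θ :=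
    (hda.mul ((hasDerivAt_const θ α).sub hdα0)).sub
      (hdb.mul ((hasDerivAt_const θ (Real.cos α)).sub hcosA0))
  have hdZθ : HasDerivAt (fun θ' => ξ * zs / (2 * Real.cos θ' ^ 2) +
      zs / (2 * Real.cos θ' ^ 2) *
        Real.sqrt ((ξ - 2) ^ 2 + 4 * (ξ - 1) * Real.sin θ' ^ 2) * Real.sin α) _ θ :=
    hda.add (hdb.mul_const (Real.sin α))
  have hdZα : HasDerivAt (fun α' => ξ * zs / (2 * Real.cos θ ^ 2) +
      zs / (2 * Real.cos θ ^ 2) *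
        Real.sqrt ((ξ - 2) ^ 2 + 4 * (ξ - 1) * Real.sin θ ^ 2) * Real.sin α')
      (zs / (2 * Real.cos θ ^ 2) *
        Real.sqrt ((ξ - 2) ^ 2 + 4 * (ξ - 1) * Real.sin θ ^ 2) * Real.cos α) α :=
    ((Real.hasDerivAt_sin α).const_mul _).const_add _
  have hdXα : HasDerivAt (fun α' => ξ * zs / (2 * Real.cos θ ^ 2) *
      (α' - (σ * Real.pi / 2 - θ + Real.arctan (ξ / (ξ - 2) * Real.tan θ)))
      - zs / (2 * Real.cos θ ^ 2) *
          Real.sqrt ((ξ - 2) ^ 2 + 4 * (ξ - 1) * Real.sin θ ^ 2) *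
        (Real.cos α' - Real.cos (σ * Real.pi / 2 - θ +
          Real.arctan (ξ / (ξ - 2) * Real.tan θ))))
      (ξ * zs / (2 * Real.cos θ ^ 2) + zs / (2 * Real.cos θ ^ 2) *
          Real.sqrt ((ξ - 2) ^ 2 + 4 * (ξ - 1) * Real.sin θ ^ 2) * Real.sin α) α := by
    have h1 := ((hasDerivAt_id α).sub_const (σ * Real.pi / 2 - θ +
      Real.arctan (ξ / (ξ - 2) * Real.tan θ))).const_mul (ξ * zs / (2 * Real.cos θ ^ 2))
    have h2 := ((Real.hasDerivAt_cos α).sub_const (Real.cos (σ * Real.pi / 2 - θ +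
      Real.arctan (ξ / (ξ - 2) * Real.tan θ)))).const_mul (zs / (2 * Real.cos θ ^ 2) *
        Real.sqrt ((ξ - 2) ^ 2 + 4 * (ξ - 1) * Real.sin θ ^ 2))
    have h3 := h1.sub h2
    refine HasDerivAt.congr_deriv h3 (Eq.symm ?_)
    ring
  rw [hdX.deriv, hdZα.deriv, hdXα.deriv, hdZθ.deriv, hdα0.deriv]
  exact jac_assemble _ _ _ _ _ zs α _ _ _ _ hB0 (Real.sin_sq_add_cos_sq α) hstar
end

section
/- Let ξ > 1 with ξ ≠ 2 and z_s > 0. With a(0) = ξ·z_s/2, tan 0 = 0, and α₀'(0) = 2/(ξ−2) (the value at θ = 0 of the derivative formula dα₀/dθ = −1 + ξ(ξ−2)/((ξ−2)² + 4(ξ−1)sin²θ)), the scaled Jacobian at θ = 0 satisfies, for every α ∈ ℝ and b ∈ ℝ: J(0, α) = b·cos α·( −a(0)·α₀'(0) + z_s ) = b·z_s·cos α·(1 − ξ/(ξ−2)) = −2b·z_s·cos α/(ξ−2). Consequently J(0, α) = 0 exactly when cos α = 0, i.e. the ray with take-off angle θ = 0 touches caustics only at its turning points. -/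
/-- The scaled Jacobian at take-off angle `θ = 0`: with `a(0) = ξ z_s/2`
(the value at `θ = 0` of `a(θ) = ξ z_s/(2cos²θ)`), `tan 0 = 0`, and
`α₀'(0) = 2/(ξ-2)` (the value at `θ = 0` of
`dα₀/dθ = -1 + ξ(ξ-2)/((ξ-2)² + 4(ξ-1)sin²θ)`), the Jacobian formula gives,
for every `α` and `b`,
`J(0,α) = b cos α (-a(0) α₀'(0) + z_s) = b z_s cos α (1 - ξ/(ξ-2))
        = -2 b z_s cos α/(ξ-2)`;
consequently (for `b ≠ 0`) `J(0,α) = 0` exactly when `cos α = 0`, i.e. the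
ray with take-off angle `θ = 0` touches caustics only at its turning points. -/
theorem jacobian_at_zero_takeoff
    (ξ zs : ℝ) (hξ : 1 < ξ) (hξ2 : ξ ≠ 2) (hzs : 0 < zs)
    (a0 A : ℝ)
    (ha0 : a0 = ξ * zs / (2 * Real.cos (0 : ℝ) ^ 2))
    (hA : A = -1 + ξ * (ξ - 2) /
      ((ξ - 2) ^ 2 + 4 * (ξ - 1) * Real.sin (0 : ℝ) ^ 2)) :
    A = 2 / (ξ - 2) ∧
    ∀ b α α0v : ℝ,
      (b * Real.cos α *
          (2 * a0 * (α - α0v) * Real.tan 0 - a0 * A +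
            zs * (1 + Real.tan (0 : ℝ) ^ 2))
        - (Real.tan (0 : ℝ) / b) *
            ((a0 ^ 3 + 3 * a0 * b ^ 2) * Real.sin α + 3 * a0 ^ 2 * b + b ^ 3)
        = b * Real.cos α * (-(a0 * A) + zs)) ∧
      b * Real.cos α * (-(a0 * A) + zs)
        = b * zs * Real.cos α * (1 - ξ / (ξ - 2)) ∧
      b * Real.cos α * (-(a0 * A) + zs)
        = -(2 * b * zs * Real.cos α / (ξ - 2)) ∧
      (b ≠ 0 → (b * Real.cos α * (-(a0 * A) + zs) = 0 ↔ Real.cos α = 0)) := by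
  have hd : ξ - 2 ≠ 0 := sub_ne_zero.mpr hξ2
  simp only [Real.cos_zero, Real.sin_zero, Real.tan_zero] at ha0 hA ⊢
  have hA' : A = 2 / (ξ - 2) := by
    rw [hA]; field_simp; ring
  have ha0' : a0 = ξ * zs / 2 := by rw [ha0]; norm_num
  have hval : -(a0 * A) + zs = -(2 * zs / (ξ - 2)) := by
    rw [hA', ha0']; field_simp; ring
  refine ⟨hA', fun b α α0v => ⟨by simp, ?_, ?_, ?_⟩⟩
  · rw [hval]
    have h2 : 1 - ξ / (ξ - 2) = -(2 / (ξ - 2)) := by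
      field_simp
      ring
    rw [h2]; ring
  · rw [hval]; ring
  · intro hb
    rw [hval]
    constructor
    · intro h
      have hz : -(2 * zs / (ξ - 2)) ≠ 0 := by
        simp only [neg_ne_zero]
        exact div_ne_zero (by positivity) hd
      have := mul_eq_zero.mp h
      rcases this with h' | h'
      · rcases mul_eq_zero.mp h' with h'' | h''
        · exact absurd h'' hb
        · exact h''
      · exact absurd h' hz
    · intro h; rw [h]; ring
end

section
/- Let v > c > 0, ω_ac > 0, ω_N > ω_ac, and θ ∈ (0, π/2) with sin²θ > c²/v². Then: (i) the ray frequency ω₀(θ) = ω_ac·sin θ/√(sin²θ − c²/v²) satisfies ω₀(θ) ≤ ω_N if and only if sin²θ ≥ (c²/v²)·ω_N²/(ω_N² − ω_ac²); and (ii) if additionally (1 − ω_ac²/ω_N²)·v² > c², then the minimum of v_ph(θ) = v·tan θ over all θ ∈ (0, π/2) satisfying sin²θ ≥ (c²/v²)·ω_N²/(ω_N² − ω_ac²) equals v·c/√( (1 − ω_ac²/ω_N²)·v² − c² ), attained at sin²θ = (c²/v²)·ω_N²/(ω_N² − ω_ac²). -/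
set_option maxHeartbeats 1000000 in
/-- Minimum observable phase speed for a vertically downward moving
supersonic source observed below a Nyquist frequency `ω_N`: for
`v > c > 0`, `ω_N > ω_ac > 0`, and `θ ∈ (0, π/2)` with `sin²θ > c²/v²`:
(i) the ray frequency `ω₀(θ) = ω_ac sin θ/√(sin²θ - c²/v²)` satisfies
`ω₀(θ) ≤ ω_N` iff `sin²θ ≥ (c²/v²)·ω_N²/(ω_N² - ω_ac²)`;
(ii) if moreover `(1 - ω_ac²/ω_N²)v² > c²`, the minimum of `v tan θ'` over
`θ' ∈ (0, π/2)` with `sin²θ' ≥ (c²/v²)·ω_N²/(ω_N² - ω_ac²)` equals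
`vc/√((1 - ω_ac²/ω_N²)v² - c²)`, attained at
`sin²θ' = (c²/v²)·ω_N²/(ω_N² - ω_ac²)`. -/
theorem min_observable_phase_speed
    (v c ωac ωN : ℝ) (hc : 0 < c) (hvc : c < v) (hωac : 0 < ωac)
    (hωN : ωac < ωN)
    (θ : ℝ) (hθ : θ ∈ Set.Ioo (0 : ℝ) (Real.pi / 2))
    (hss : c ^ 2 / v ^ 2 < Real.sin θ ^ 2) :
    (ωac * Real.sin θ / Real.sqrt (Real.sin θ ^ 2 - c ^ 2 / v ^ 2) ≤ ωN ↔
      c ^ 2 / v ^ 2 * (ωN ^ 2 / (ωN ^ 2 - ωac ^ 2)) ≤ Real.sin θ ^ 2) ∧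
    (c ^ 2 < (1 - ωac ^ 2 / ωN ^ 2) * v ^ 2 →
      IsLeast { y : ℝ | ∃ θ' ∈ Set.Ioo (0 : ℝ) (Real.pi / 2),
          c ^ 2 / v ^ 2 * (ωN ^ 2 / (ωN ^ 2 - ωac ^ 2)) ≤ Real.sin θ' ^ 2 ∧
          y = v * Real.tan θ' }
        (v * c / Real.sqrt ((1 - ωac ^ 2 / ωN ^ 2) * v ^ 2 - c ^ 2)) ∧
      ∃ θ' ∈ Set.Ioo (0 : ℝ) (Real.pi / 2),
        Real.sin θ' ^ 2 = c ^ 2 / v ^ 2 * (ωN ^ 2 / (ωN ^ 2 - ωac ^ 2)) ∧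
        v * Real.tan θ'
          = v * c / Real.sqrt ((1 - ωac ^ 2 / ωN ^ 2) * v ^ 2 - c ^ 2)) := by
  obtain ⟨hθ0, hθ2⟩ := hθ
  have hv : 0 < v := hc.trans hvc
  have hπ := Real.pi_pos
  have hs : 0 < Real.sin θ :=
    Real.sin_pos_of_pos_of_lt_pi hθ0 (by linarith)
  have hωN0 : 0 < ωN := hωac.trans hωN
  have hB : 0 < ωN ^ 2 - ωac ^ 2 := by nlinarith
  have hdiff : 0 < Real.sin θ ^ 2 - c ^ 2 / v ^ 2 := by linarith
  have ht : 0 < Real.sqrt (Real.sin θ ^ 2 - c ^ 2 / v ^ 2) := Real.sqrt_pos.mpr hdiff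
  have ht2 : Real.sqrt (Real.sin θ ^ 2 - c ^ 2 / v ^ 2) ^ 2 = Real.sin θ ^ 2 - c ^ 2 / v ^ 2 :=
    Real.sq_sqrt hdiff.le
  constructor
  · rw [div_le_iff₀ ht]
    constructor
    · intro h
      have h2 : (ωac * Real.sin θ) ^ 2 ≤ (ωN * Real.sqrt (Real.sin θ ^ 2 - c ^ 2 / v ^ 2)) ^ 2 := by
        have h0 : 0 ≤ ωac * Real.sin θ := by positivity
        nlinarith
      rw [mul_pow, mul_pow, ht2] at h2
      rw [mul_div_assoc', div_le_iff₀ hB]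
      nlinarith
    · intro h
      rw [mul_div_assoc', div_le_iff₀ hB] at h
      have h2 : (ωac * Real.sin θ) ^ 2 ≤ (ωN * Real.sqrt (Real.sin θ ^ 2 - c ^ 2 / v ^ 2)) ^ 2 := by
        rw [mul_pow, mul_pow, ht2]; nlinarith
      nlinarith [mul_pos hωac hs, mul_pos hωN0 ht]
  · intro hD
    set K := c ^ 2 / v ^ 2 * (ωN ^ 2 / (ωN ^ 2 - ωac ^ 2)) with hK_def
    set D := (1 - ωac ^ 2 / ωN ^ 2) * v ^ 2 - c ^ 2 with hD_def
    have hDpos : 0 < D := by rw [hD_def]; linarith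
    have hK0 : 0 < K := by rw [hK_def]; positivity
    have e2 : ωac ^ 2 / ωN ^ 2 * ωN ^ 2 * v ^ 2 = ωac ^ 2 * v ^ 2 := by field_simp
    have hK1 : K < 1 := by
      rw [hK_def, div_mul_div_comm, div_lt_one (by positivity)]
      have h' := mul_lt_mul_of_pos_right hD (pow_pos hωN0 2)
      nlinarith
    have h1K : 0 < 1 - K := by linarith
    have hsqrtD : 0 < Real.sqrt D := Real.sqrt_pos.mpr hDpos
    have hfrac : K / (1 - K) = c ^ 2 / D := by
      rw [hK_def, hD_def]
      have hBne : ωN ^ 2 - ωac ^ 2 ≠ 0 := ne_of_gt hB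
      have hDne : (1 - ωac ^ 2 / ωN ^ 2) * v ^ 2 - c ^ 2 ≠ 0 := by
        rw [← hD_def]; exact ne_of_gt hDpos
      have h1Kne : (1 : ℝ) - c ^ 2 / v ^ 2 * (ωN ^ 2 / (ωN ^ 2 - ωac ^ 2)) ≠ 0 := by
        rw [← hK_def]; exact ne_of_gt h1K
      field_simp
    have hEq : Real.sqrt (K / (1 - K)) = c / Real.sqrt D := by
      rw [hfrac, Real.sqrt_div (sq_nonneg c), Real.sqrt_sq hc.le]
    -- lower bound for any admissible θ'
    have hlb : ∀ θ' ∈ Set.Ioo (0 : ℝ) (Real.pi / 2),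
        K ≤ Real.sin θ' ^ 2 → v * c / Real.sqrt D ≤ v * Real.tan θ' := by
      rintro θ' ⟨h0', h2'⟩ hKle
      have hcos' : 0 < Real.cos θ' :=
        Real.cos_pos_of_mem_Ioo ⟨by linarith, h2'⟩
      have hcos2 : Real.cos θ' ^ 2 = 1 - Real.sin θ' ^ 2 := Real.cos_sq' θ'
      have hsin1 : Real.sin θ' ^ 2 < 1 := by nlinarith
      have hsin' : 0 ≤ Real.sin θ' :=
        Real.sin_nonneg_of_nonneg_of_le_pi h0'.le (by linarith)
      have key : K / (1 - K) ≤ (Real.sin θ' / Real.cos θ') ^ 2 := by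
        rw [div_pow, hcos2, div_le_div_iff₀ h1K (by linarith)]
        nlinarith
      have hstep : Real.sqrt (K / (1 - K)) ≤ Real.sin θ' / Real.cos θ' := by
        calc Real.sqrt (K / (1 - K)) ≤ Real.sqrt ((Real.sin θ' / Real.cos θ') ^ 2) :=
              Real.sqrt_le_sqrt key
          _ = Real.sin θ' / Real.cos θ' := Real.sqrt_sq (by positivity)
      rw [Real.tan_eq_sin_div_cos, mul_div_assoc, ← hEq]
      exact mul_le_mul_of_nonneg_left hstep hv.le
    -- the witness
    have hs0 : 0 < Real.sqrt K := Real.sqrt_pos.mpr hK0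
    have hs01 : Real.sqrt K < 1 := by
      rw [show (1 : ℝ) = Real.sqrt 1 by simp]
      exact Real.sqrt_lt_sqrt hK0.le hK1
    set θ₀ := Real.arcsin (Real.sqrt K) with hθ₀_def
    have hθ₀0 : 0 < θ₀ := Real.arcsin_pos.mpr hs0
    have hθ₀2 : θ₀ < Real.pi / 2 := Real.arcsin_lt_pi_div_two.mpr hs01
    have hsin0 : Real.sin θ₀ = Real.sqrt K :=
      Real.sin_arcsin (by linarith) hs01.le
    have hsin02 : Real.sin θ₀ ^ 2 = K := by rw [hsin0, Real.sq_sqrt hK0.le]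
    have hcos0 : Real.cos θ₀ = Real.sqrt (1 - K) := by
      rw [hθ₀_def, Real.cos_arcsin, Real.sq_sqrt hK0.le]
    have htan0 : v * Real.tan θ₀ = v * c / Real.sqrt D := by
      rw [Real.tan_eq_sin_div_cos, hsin0, hcos0,
        ← Real.sqrt_div hK0.le, hEq, mul_div_assoc]
    refine ⟨⟨⟨θ₀, ⟨hθ₀0, hθ₀2⟩, le_of_eq hsin02.symm, htan0.symm⟩, ?_⟩,
      θ₀, ⟨hθ₀0, hθ₀2⟩, hsin02, htan0⟩
    rintro y ⟨θ', hmem, hKle, rfl⟩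
    exact hlb θ' hmem hKle
end
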